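/- For every q ≥ 2 and r ≥ 3 there exists a constant c > 0 such that for every n ≥ 1 there exists a family F of vectors in [q]^n containing no q-ary focal family of size r with |F| ≥ c·(q/((q−1)(r−1)+1)^{1/(r−1)})^n. -/

import Mathlib

open Finset

/-- A family consisting of a focus vector `x₀` and `m` further vectors `xs 0, …, xs (m-1)`
in `α^n` is *focal with focus `x₀`* if for every coordinate `i`, at most one of the
vectors `xs j` differs from `x₀` at `i` (equivalently, at least `m - 1` of the `m`
entries `xs j i` are equal to `x₀ i`). -/
def IsFocalWithFocus {α : Type*} {n m : ℕ} (x₀ : Fin n → α) (xs : Fin m → Fin n → α) : Prop :=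
  ∀ i : Fin n, ∀ j j' : Fin m, xs j i ≠ x₀ i → xs j' i ≠ x₀ i → j = j'

/-- A family `F` of vectors contains a focal family of size `r` if there are `r`
distinct members `x₀, xs 0, …, xs (r-2)` of `F` that are focal with focus `x₀`. -/
def ContainsFocalFamily {α : Type*} {n : ℕ} (F : Finset (Fin n → α)) (r : ℕ) : Prop :=
  ∃ x₀ ∈ F, ∃ xs : Fin (r - 1) → Fin n → α,
    (∀ j, xs j ∈ F) ∧ Function.Injective xs ∧ (∀ j, xs j ≠ x₀) ∧ IsFocalWithFocus x₀ xs

instance {α : Type*} [DecidableEq α] {n m : ℕ} (x₀ : Fin n → α) (xs : Fin m → Fin n → α) :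
    Decidable (IsFocalWithFocus x₀ xs) := by
  unfold IsFocalWithFocus; infer_instance

lemma count_lin_solutions (N s n : ℕ) [Fact N.Prime] (c : Fin s → Fin n → ZMod N)
    (hne : ∀ j, ∃ i, c j i ≠ 0)
    (hdisj : ∀ (i : Fin n) (j j' : Fin s), c j i ≠ 0 → c j' i ≠ 0 → j = j') :
    (univ.filter (fun a : Fin n → ZMod N => ∀ j, ∑ i, a i * c j i = 0)).card ≤ N ^ (n - s) := by
  classical
  -- witness coordinates
  have w : ∀ j, ∃ i, c j i ≠ 0 := hne
  set wit : Fin s → Fin n := fun j => (w j).choose with hwit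
  have hwspec : ∀ j, c j (wit j) ≠ 0 := fun j => (w j).choose_spec
  have hwinj : Function.Injective wit := by
    intro j j' h
    exact hdisj (wit j) j j' (hwspec j) (h ▸ hwspec j')
  have hsn : s ≤ n := by
    simpa using Fintype.card_le_of_injective wit hwinj
  -- the linear map
  let ψ : (Fin n → ZMod N) →ₗ[ZMod N] (Fin s → ZMod N) :=
    { toFun := fun a j => ∑ i, a i * c j i
      map_add' := by
        intro a b; funext j
        simp [add_mul, Finset.sum_add_distrib]
      map_smul' := by
        intro m a; funext j
        simp [Finset.mul_sum, mul_assoc] }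
  have hsurj : Function.Surjective ψ := by
    intro t
    refine ⟨fun i => if h : ∃ j, wit j = i then t h.choose * (c h.choose i)⁻¹ else 0, ?_⟩
    funext j
    show (∑ i, _ * c j i) = t j
    rw [Finset.sum_eq_single (wit j)]
    · have h : ∃ j', wit j' = wit j := ⟨j, rfl⟩
      have hch : h.choose = j := hwinj h.choose_spec
      rw [dif_pos h, hch]
      field_simp
      exact mul_div_cancel_right₀ (t j) (hwspec j)
    · intro i _ hi
      by_cases h : ∃ j', wit j' = i
      · obtain ⟨j0, hj0⟩ := h
        have hcj : c j i = 0 := by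
          by_contra hc
          have hj0ne : c j0 i ≠ 0 := by rw [← hj0]; exact hwspec j0
          have hjj : j0 = j := hdisj i j0 j hj0ne hc
          exact hi (by rw [← hjj]; exact hj0.symm)
        simp [hcj]
      · simp [dif_neg h]
    · intro h; exact absurd (Finset.mem_univ _) h
  -- cardinality of the kernel
  have hker : (univ.filter (fun a : Fin n → ZMod N => ∀ j, ∑ i, a i * c j i = 0)) =
      (univ.filter (fun a => a ∈ LinearMap.ker ψ)) := by
    apply Finset.filter_congr
    intro a _
    simp only [LinearMap.mem_ker]
    constructor
    · intro h; funext j; exact h j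
    · intro h j; exact congrFun h j
  rw [hker]
  have hcard : (univ.filter (fun a => a ∈ LinearMap.ker ψ)).card
      = Fintype.card (LinearMap.ker ψ) := by
    rw [Fintype.card_subtype]
  rw [hcard]
  have hrank : Module.finrank (ZMod N) (LinearMap.ker ψ) = n - s := by
    have h1 := LinearMap.finrank_range_add_finrank_ker ψ
    rw [LinearMap.range_eq_top.mpr hsurj] at h1
    simp [Module.finrank_fintype_fun_eq_card] at h1
    omega
  have := Module.card_eq_pow_finrank (K := ZMod N) (V := LinearMap.ker ψ)
  rw [this, hrank, ZMod.card]

lemma focal_count (q n s : ℕ) :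
    (univ.filter (fun c : (Fin n → Fin q) × (Fin s → Fin n → Fin q) =>
      (∀ j, c.2 j ≠ c.1) ∧ IsFocalWithFocus c.1 c.2)).card
      ≤ q ^ n * ((q - 1) * s + 1) ^ n := by
  set P : (Fin n → Fin q) × (Fin s → Fin n → Fin q) → Prop := fun c =>
    (∀ j, c.2 j ≠ c.1) ∧ IsFocalWithFocus c.1 c.2 with hP
  rw [← Fintype.card_subtype]
  -- encoding
  let T := Σ x₀ : Fin n → Fin q, ∀ i : Fin n, Option (Fin s × {v : Fin q // v ≠ x₀ i})
  let enc : {c // P c} → T := fun c =>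
    ⟨c.1.1, fun i => if h : ∃ j, c.1.2 j i ≠ c.1.1 i then
        some (h.choose, ⟨c.1.2 h.choose i, h.choose_spec⟩) else none⟩
  -- decoding lemma
  have key : ∀ (x₀ : Fin n → Fin q) (ys : Fin s → Fin n → Fin q),
      IsFocalWithFocus x₀ ys → ∀ (j : Fin s) (i : Fin n),
      ys j i = (if h : ∃ j', ys j' i ≠ x₀ i then
          some ((h.choose : Fin s), (⟨ys h.choose i, h.choose_spec⟩ : {v : Fin q // v ≠ x₀ i}))
          else none).elim (x₀ i) (fun p => if p.1 = j then p.2.1 else x₀ i) := by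
    intro x₀ ys hfoc j i
    by_cases h : ∃ j', ys j' i ≠ x₀ i
    · rw [dif_pos h]
      simp only [Option.elim]
      by_cases hji : ys j i = x₀ i
      · rw [if_neg, hji]
        intro hc
        exact h.choose_spec (hc ▸ hji)
      · rw [if_pos (hfoc i h.choose j h.choose_spec hji)]
        rw [hfoc i h.choose j h.choose_spec hji]
    · rw [dif_neg h]
      push_neg at h
      exact h j
  have hinj : Function.Injective enc := by
    intro c₁ c₂ hEq
    obtain ⟨⟨x₁, ys₁⟩, hne₁, hfoc₁⟩ := c₁
    obtain ⟨⟨x₂, ys₂⟩, hne₂, hfoc₂⟩ := c₂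
    have hx : x₁ = x₂ := congrArg Sigma.fst hEq
    subst hx
    have hsnd := eq_of_heq ((Sigma.ext_iff.mp hEq).2)
    apply Subtype.ext
    show (x₁, ys₁) = (x₁, ys₂)
    have hys : ys₁ = ys₂ := by
      funext j i
      rw [key x₁ ys₁ hfoc₁ j i, key x₁ ys₂ hfoc₂ j i]
      exact congrArg (fun o => Option.elim o (x₁ i)
        (fun p : Fin s × {v : Fin q // v ≠ x₁ i} => if p.1 = j then p.2.1 else x₁ i))
        (congrFun hsnd i)
    rw [hys]
  calc Fintype.card {c // P c} ≤ Fintype.card T := Fintype.card_le_of_injective enc hinj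
    _ = q ^ n * ((q - 1) * s + 1) ^ n := by
        simp only [T, Fintype.card_sigma, Fintype.card_pi, Fintype.card_option,
          Fintype.card_prod, Fintype.card_subtype_compl, Fintype.card_subtype_eq,
          Fintype.card_fin, Finset.prod_const, Finset.card_univ, Fintype.card_fun,
          Finset.sum_const, smul_eq_mul]
        ring

lemma focal_sn {q n s : ℕ} (x₀ : Fin n → Fin q) (ys : Fin s → Fin n → Fin q)
    (hne : ∀ j, ys j ≠ x₀) (hfoc : IsFocalWithFocus x₀ ys) : s ≤ n := by
  have h : ∀ j, ∃ i, ys j i ≠ x₀ i := fun j => Function.ne_iff.mp (hne j)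
  have hinj : Function.Injective (fun j => (h j).choose) := by
    intro j j' hjj
    have hjj' : (h j).choose = (h j').choose := hjj
    refine hfoc (h j).choose j j' (h j).choose_spec ?_
    rw [hjj']; exact (h j').choose_spec
  simpa using Fintype.card_le_of_injective _ hinj

/-- For every `q ≥ 2` and `r ≥ 3` there is `c > 0` such that for every `n ≥ 1` there is a
family of vectors in `[q]^n` with no `q`-ary focal family of size `r` of cardinality at
least `c·(q/((q-1)(r-1)+1)^(1/(r-1)))^n`. -/
theorem q_ary_focal_family_lower_bound (q r : ℕ) (hq : 2 ≤ q) (hr : 3 ≤ r) :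
    ∃ c : ℝ, 0 < c ∧ ∀ n : ℕ, 1 ≤ n →
      ∃ F : Finset (Fin n → Fin q),
        ¬ ContainsFocalFamily F r ∧
        c * ((q : ℝ) / (((q : ℝ) - 1) * ((r : ℝ) - 1) + 1) ^ ((1 : ℝ) / ((r : ℝ) - 1))) ^ n
          ≤ (F.card : ℝ) := by
  have hq0 : (0:ℝ) < q := by positivity
  refine ⟨1 / (12 * q), by positivity, ?_⟩
  intro n hn
  set s := r - 1 with hs
  have hs1 : 1 ≤ s := by omega
  set D := (q - 1) * s + 1 with hD
  have hD2 : 2 ≤ D := by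
    have : 1 ≤ (q - 1) * s := Nat.one_le_iff_ne_zero.mpr
      (Nat.mul_ne_zero (by omega) (by omega))
    omega
  -- choose K minimal with 2 * D ^ n ≤ K ^ s
  have hKex : ∃ K, 2 * D ^ n ≤ K ^ s := by
    refine ⟨2 * D ^ n, ?_⟩
    calc 2 * D ^ n = (2 * D ^ n) ^ 1 := (pow_one _).symm
      _ ≤ (2 * D ^ n) ^ s := Nat.pow_le_pow_right (by positivity) hs1
  set K := Nat.find hKex with hK
  have hKspec : 2 * D ^ n ≤ K ^ s := Nat.find_spec hKex
  have hK1 : 1 ≤ K := by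
    by_contra h
    have hK0 : K = 0 := by omega
    rw [hK0, zero_pow (by omega : s ≠ 0)] at hKspec
    have : 1 ≤ D ^ n := Nat.one_le_pow _ _ (by omega)
    omega
  have hKmin : (K - 1) ^ s < 2 * D ^ n := by
    have := Nat.find_min hKex (m := K - 1) (by omega)
    omega
  clear_value K
  -- Bertrand prime
  obtain ⟨N, hNp, hmN, hN2m⟩ := Nat.bertrand (max q K) (by omega)
  have hqN : q < N := lt_of_le_of_lt (le_max_left _ _) hmN
  have hKN : K ≤ N := le_of_lt (lt_of_le_of_lt (le_max_right _ _) hmN)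
  have hNs : 2 * D ^ n ≤ N ^ s := le_trans hKspec (Nat.pow_le_pow_left hKN s)
  haveI := Fact.mk hNp
  haveI : NeZero N := ⟨hNp.ne_zero⟩
  -- the hash functions and fibers
  set φ : (Fin n → ZMod N) → (Fin n → Fin q) → ZMod N :=
    fun a x => ∑ i, a i * (((x i : ℕ)) : ZMod N) with hφ
  set P : (Fin n → Fin q) × (Fin s → (Fin n → Fin q)) → Prop := fun c =>
    (∀ j, c.2 j ≠ c.1) ∧ IsFocalWithFocus c.1 c.2 with hPdef
  set F0 : (Fin n → ZMod N) → ZMod N → Finset (Fin n → Fin q) :=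
    fun a t => univ.filter (fun x => φ a x = t) with hF0
  set Bad : (Fin n → ZMod N) → ZMod N → Finset ((Fin n → Fin q) × (Fin s → (Fin n → Fin q))) :=
    fun a t => univ.filter (fun c => (∀ j, φ a (c.2 j) = φ a c.1) ∧ P c ∧ φ a c.1 = t)
    with hBad
  -- sum of fibers
  have hS1 : ∀ a, ∑ t : ZMod N, ((F0 a t).card) = q ^ n := by
    intro a
    simp only [hF0]
    rw [← Finset.card_eq_sum_card_fiberwise (f := fun x => φ a x) (t := univ)
      (fun x _ => mem_univ _)]
    simp [Fintype.card_fun]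
  -- sum of bad counts over t
  have hS2a : ∀ a, ∑ t : ZMod N, (Bad a t).card
      = (univ.filter (fun c : (Fin n → Fin q) × (Fin s → (Fin n → Fin q)) =>
          (∀ j, φ a (c.2 j) = φ a c.1) ∧ P c)).card := by
    intro a
    rw [Finset.card_eq_sum_card_fiberwise (f := fun c => φ a c.1) (t := univ)
      (fun x _ => mem_univ _)]
    refine Finset.sum_congr rfl (fun t _ => congrArg Finset.card ?_)
    rw [Finset.filter_filter]
    ext c
    simp only [hBad, Finset.mem_filter, Finset.mem_univ, true_and]
    tauto
  -- per-config count of hash functions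
  have hper : ∀ c : (Fin n → Fin q) × (Fin s → (Fin n → Fin q)), P c →
      (univ.filter (fun a : Fin n → ZMod N => ∀ j, φ a (c.2 j) = φ a c.1)).card
        ≤ N ^ (n - s) := by
    rintro ⟨x₀, ys⟩ ⟨hne, hfoc⟩
    set d : Fin s → Fin n → ZMod N :=
      fun j i => (((ys j i : ℕ)) : ZMod N) - (((x₀ i : ℕ)) : ZMod N) with hd
    have hcast : ∀ u v : Fin q, (((u : ℕ)) : ZMod N) = (((v : ℕ)) : ZMod N) → u = v := by
      intro u v h
      have := congrArg ZMod.val h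
      rw [ZMod.val_cast_of_lt (lt_trans u.2 hqN), ZMod.val_cast_of_lt (lt_trans v.2 hqN)] at this
      exact Fin.ext this
    have hd0 : ∀ j i, d j i ≠ 0 ↔ ys j i ≠ x₀ i := by
      intro j i
      rw [hd]
      simp only [ne_eq, sub_eq_zero]
      constructor
      · intro h hc; exact h (by rw [hc])
      · intro h hc; exact h (hcast _ _ hc)
    have hne' : ∀ j, ∃ i, d j i ≠ 0 := by
      intro j
      obtain ⟨i, hi⟩ := Function.ne_iff.mp (hne j)
      exact ⟨i, (hd0 j i).mpr hi⟩
    have hdisj : ∀ (i : Fin n) (j j' : Fin s), d j i ≠ 0 → d j' i ≠ 0 → j = j' :=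
      fun i j j' h1 h2 => hfoc i j j' ((hd0 j i).mp h1) ((hd0 j' i).mp h2)
    have hiff : ∀ (a : Fin n → ZMod N) (j : Fin s),
        (φ a (ys j) = φ a x₀) ↔ (∑ i, a i * d j i = 0) := by
      intro a j
      simp only [hφ, hd]
      rw [← sub_eq_zero (b := ∑ i, a i * ((x₀ i : ℕ) : ZMod N)), ← Finset.sum_sub_distrib]
      constructor
      · intro h; rw [← h]; apply Finset.sum_congr rfl; intro i _; ring
      · intro h; rw [← h]; apply Finset.sum_congr rfl; intro i _; ring
    refine le_trans (le_of_eq (congrArg Finset.card ?_)) (count_lin_solutions N s n d hne' hdisj)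
    ext a
    simp only [Finset.mem_filter, Finset.mem_univ, true_and]
    exact forall_congr' (hiff a)
  -- total bad count
  have hS2 : ∑ a : Fin n → ZMod N, ∑ t : ZMod N, (Bad a t).card
      ≤ (univ.filter P).card * N ^ (n - s) := by
    calc ∑ a : Fin n → ZMod N, ∑ t : ZMod N, (Bad a t).card
        = ∑ a : Fin n → ZMod N, (univ.filter (fun c : (Fin n → Fin q) × (Fin s → (Fin n → Fin q)) =>
            (∀ j, φ a (c.2 j) = φ a c.1) ∧ P c)).card :=
          Finset.sum_congr rfl (fun a _ => hS2a a)
      _ = ∑ a : Fin n → ZMod N, ∑ c : (Fin n → Fin q) × (Fin s → (Fin n → Fin q)),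
            (if (∀ j, φ a (c.2 j) = φ a c.1) ∧ P c then 1 else 0) :=
          Finset.sum_congr rfl (fun a _ => Finset.card_filter _ _)
      _ = ∑ c : (Fin n → Fin q) × (Fin s → (Fin n → Fin q)), ∑ a : Fin n → ZMod N,
            (if (∀ j, φ a (c.2 j) = φ a c.1) ∧ P c then 1 else 0) := Finset.sum_comm
      _ = ∑ c : (Fin n → Fin q) × (Fin s → (Fin n → Fin q)),
            (univ.filter (fun a : Fin n → ZMod N =>
              (∀ j, φ a (c.2 j) = φ a c.1) ∧ P c)).card :=
          Finset.sum_congr rfl (fun c _ => (Finset.card_filter _ _).symm)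
      _ ≤ ∑ c : (Fin n → Fin q) × (Fin s → (Fin n → Fin q)), (if P c then N ^ (n - s) else 0) := by
          refine Finset.sum_le_sum (fun c _ => ?_)
          by_cases hPc : P c
          · rw [if_pos hPc]
            refine le_trans (Finset.card_le_card ?_) (hper c hPc)
            intro a ha
            rw [Finset.mem_filter] at ha ⊢
            exact ⟨ha.1, ha.2.1⟩
          · rw [if_neg hPc]
            have : (univ.filter (fun a : Fin n → ZMod N =>
                (∀ j, φ a (c.2 j) = φ a c.1) ∧ P c)) = ∅ := by
              rw [Finset.filter_eq_empty_iff]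
              intro a _ hc
              exact hPc hc.2
            rw [this]; simp
      _ = (univ.filter P).card * N ^ (n - s) := by
          rw [← Finset.sum_filter, Finset.sum_const, smul_eq_mul]
  -- bound on the p-count
  have hPbound : 2 * ((univ.filter P).card * N ^ (n - s)) ≤ q ^ n * N ^ n := by
    rcases le_or_gt s n with hsn | hns
    · have h1 : (univ.filter P).card ≤ q ^ n * D ^ n := focal_count q n s
      calc 2 * ((univ.filter P).card * N ^ (n - s))
          ≤ 2 * ((q ^ n * D ^ n) * N ^ (n - s)) := by
            exact Nat.mul_le_mul_left _ (Nat.mul_le_mul_right _ h1)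
        _ = q ^ n * ((2 * D ^ n) * N ^ (n - s)) := by ring
        _ ≤ q ^ n * (N ^ s * N ^ (n - s)) := by
            exact Nat.mul_le_mul_left _ (Nat.mul_le_mul_right _ hNs)
        _ = q ^ n * N ^ n := by rw [← pow_add]; congr 2; omega
    · have h0 : (univ.filter P) = ∅ := by
        rw [Finset.filter_eq_empty_iff]
        rintro ⟨x₀, ys⟩ _ ⟨hne, hfoc⟩
        exact absurd (focal_sn x₀ ys hne hfoc) (by omega)
      rw [h0]
      simp
  -- averaging over pairs (a, t)
  have hNR : (0:ℝ) < N := by exact_mod_cast hNp.pos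
  have hexists : ∃ p : (Fin n → ZMod N) × ZMod N,
      (q:ℝ) ^ n / (2 * N) ≤ ((F0 p.1 p.2).card : ℝ) - ((Bad p.1 p.2).card : ℝ) := by
    have hsum1 : ∑ p : (Fin n → ZMod N) × ZMod N, ((F0 p.1 p.2).card : ℝ)
        = (N:ℝ) ^ n * (q:ℝ) ^ n := by
      rw [Fintype.sum_prod_type]
      have : ∀ a : Fin n → ZMod N, ∑ t : ZMod N, ((F0 a t).card : ℝ) = (q:ℝ) ^ n := by
        intro a
        rw [← Nat.cast_sum]
        exact_mod_cast congrArg (Nat.cast (R := ℝ)) (hS1 a)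
      rw [Finset.sum_congr rfl (fun a _ => this a), Finset.sum_const, Finset.card_univ,
        Fintype.card_fun, ZMod.card, Fintype.card_fin, nsmul_eq_mul]
      push_cast
      ring
    have hsum2 : ∑ p : (Fin n → ZMod N) × ZMod N, ((Bad p.1 p.2).card : ℝ)
        ≤ (q:ℝ) ^ n * (N:ℝ) ^ n / 2 := by
      rw [Fintype.sum_prod_type]
      have h1 : ∑ a : Fin n → ZMod N, ∑ t : ZMod N, ((Bad a t).card : ℝ)
          = ((∑ a : Fin n → ZMod N, ∑ t : ZMod N, (Bad a t).card : ℕ) : ℝ) := by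
        push_cast; rfl
      rw [h1]
      have h2 : ((∑ a : Fin n → ZMod N, ∑ t : ZMod N, (Bad a t).card : ℕ) : ℝ)
          ≤ (((univ.filter P).card * N ^ (n - s) : ℕ) : ℝ) := by exact_mod_cast hS2
      refine le_trans h2 ?_
      have h3 : ((2 * ((univ.filter P).card * N ^ (n - s)) : ℕ) : ℝ)
          ≤ ((q ^ n * N ^ n : ℕ) : ℝ) := by exact_mod_cast hPbound
      push_cast at h3 ⊢
      linarith
    have hsums : ∑ _p : (Fin n → ZMod N) × ZMod N, (q:ℝ) ^ n / (2 * N)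
        ≤ ∑ p : (Fin n → ZMod N) × ZMod N,
            (((F0 p.1 p.2).card : ℝ) - ((Bad p.1 p.2).card : ℝ)) := by
      rw [Finset.sum_sub_distrib, hsum1, Finset.sum_const, Finset.card_univ,
        Fintype.card_prod, Fintype.card_fun, ZMod.card, Fintype.card_fin, nsmul_eq_mul]
      have hNn : (0:ℝ) < (N:ℝ) ^ n := by positivity
      have heq : ((N ^ n * N : ℕ) : ℝ) * ((q:ℝ) ^ n / (2 * N))
          = (N:ℝ) ^ n * (q:ℝ) ^ n / 2 := by
        push_cast
        field_simp
      rw [heq]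
      linarith
    obtain ⟨p, -, hp⟩ := Finset.exists_le_of_sum_le Finset.univ_nonempty hsums
    exact ⟨p, hp⟩
  obtain ⟨⟨a, t⟩, hgood⟩ := hexists
  -- the final family
  refine ⟨F0 a t \ (Bad a t).image Prod.fst, ?_, ?_⟩
  · rintro ⟨x₀, hx₀F, xs, hxsF, hinj, hxne, hfoc⟩
    have hx₀ := Finset.mem_sdiff.mp hx₀F
    have hx₀t : φ a x₀ = t := (Finset.mem_filter.mp hx₀.1).2
    have hmem : ((x₀, xs) : (Fin n → Fin q) × (Fin s → (Fin n → Fin q))) ∈ Bad a t := by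
      rw [hBad, Finset.mem_filter]
      refine ⟨mem_univ _, ?_, ⟨hxne, hfoc⟩, hx₀t⟩
      intro j
      have := (Finset.mem_filter.mp (Finset.mem_sdiff.mp (hxsF j)).1).2
      rw [this, hx₀t]
    exact hx₀.2 (Finset.mem_image.mpr ⟨(x₀, xs), hmem, rfl⟩)
  · -- cardinality bound
    have himg : ((Bad a t).image Prod.fst).card ≤ (Bad a t).card := Finset.card_image_le
    have h1 : (F0 a t).card ≤ (F0 a t \ (Bad a t).image Prod.fst).card
        + ((Bad a t).image Prod.fst).card := by
      have := Finset.le_card_sdiff ((Bad a t).image Prod.fst) (F0 a t)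
      omega
    have hcard : (q:ℝ) ^ n / (2 * N)
        ≤ ((F0 a t \ (Bad a t).image Prod.fst).card : ℝ) := by
      have h1' : ((F0 a t).card : ℝ) ≤ ((F0 a t \ (Bad a t).image Prod.fst).card : ℝ)
          + (((Bad a t).image Prod.fst).card : ℝ) := by exact_mod_cast h1
      have himg' : (((Bad a t).image Prod.fst).card : ℝ) ≤ ((Bad a t).card : ℝ) := by
        exact_mod_cast himg
      linarith
    refine le_trans ?_ hcard
    -- numeric: c * (q / D^(1/s))^n ≤ q^n / (2N)
    have hsR : ((s:ℕ):ℝ) = (r:ℝ) - 1 := by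
      rw [hs]; push_cast [Nat.cast_sub (by omega : 1 ≤ r)]; ring
    have hDR : ((D:ℕ):ℝ) = ((q:ℝ) - 1) * ((r:ℝ) - 1) + 1 := by
      rw [hD]; push_cast [Nat.cast_sub (by omega : 1 ≤ q), Nat.cast_sub (by omega : 1 ≤ r)]
      rw [hsR]
    have hsR0 : (0:ℝ) < (s:ℝ) := by exact_mod_cast hs1
    have hDR1 : (1:ℝ) ≤ (D:ℝ) := by exact_mod_cast (by omega : 1 ≤ D)
    set X : ℝ := (D:ℝ) ^ ((n:ℝ) / (s:ℝ)) with hX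
    have hX1 : (1:ℝ) ≤ X := Real.one_le_rpow hDR1 (by positivity)
    have hXpos : (0:ℝ) < X := lt_of_lt_of_le one_pos hX1
    -- N ≤ 6 q X
    have hKX : (K:ℝ) ≤ 3 * X := by
      set Y : ℝ := ((2:ℝ) * (D:ℝ) ^ n) ^ ((1:ℝ) / (s:ℝ)) with hY
      have hDn0 : (0:ℝ) ≤ (2:ℝ) * (D:ℝ) ^ n := by positivity
      have hYpow : Y ^ s = (2:ℝ) * (D:ℝ) ^ n := by
        rw [hY, ← Real.rpow_natCast (((2:ℝ) * (D:ℝ) ^ n) ^ ((1:ℝ)/(s:ℝ))) s,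
          ← Real.rpow_mul hDn0]
        rw [one_div_mul_eq_div, div_self (ne_of_gt hsR0), Real.rpow_one]
      have hKY : (K:ℝ) - 1 < Y := by
        have hcast : (((K - 1 : ℕ)) : ℝ) = (K:ℝ) - 1 := by
          rw [Nat.cast_sub hK1]; norm_num
        have hc : ((K:ℝ) - 1) ^ s < 2 * (D:ℝ) ^ n := by
          rw [← hcast]
          exact_mod_cast hKmin
        have hY0 : (0:ℝ) ≤ Y := Real.rpow_nonneg hDn0 _
        refine lt_of_pow_lt_pow_left₀ s hY0 ?_
        rw [hYpow]; exact hc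
      have hY2X : Y ≤ 2 * X := by
        rw [hY, Real.mul_rpow (by norm_num) (by positivity)]
        have h2 : (2:ℝ) ^ ((1:ℝ)/(s:ℝ)) ≤ 2 := by
          calc (2:ℝ) ^ ((1:ℝ)/(s:ℝ)) ≤ (2:ℝ) ^ (1:ℝ) :=
            Real.rpow_le_rpow_of_exponent_le one_le_two (by
              rw [div_le_one hsR0]; exact_mod_cast hs1)
            _ = 2 := Real.rpow_one 2
        have h3 : ((D:ℝ) ^ n) ^ ((1:ℝ)/(s:ℝ)) = X := by
          rw [← Real.rpow_natCast (D:ℝ) n, ← Real.rpow_mul (by linarith : (0:ℝ) ≤ (D:ℝ))]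
          rw [hX, mul_one_div]
        rw [h3]
        exact mul_le_mul_of_nonneg_right h2 (le_of_lt hXpos)
      linarith
    have hNX : (N:ℝ) ≤ 6 * q * X := by
      have hN2m' : (N:ℝ) ≤ 2 * (max q K : ℕ) := by exact_mod_cast hN2m
      have hmqK : ((max q K : ℕ) : ℝ) ≤ (q:ℝ) * K := by
        have h1 : q ≤ q * K := Nat.le_mul_of_pos_right q (by omega)
        have h2 : K ≤ q * K := Nat.le_mul_of_pos_left K (by omega)
        exact_mod_cast max_le h1 h2
      calc (N:ℝ) ≤ 2 * ((max q K : ℕ) : ℝ) := hN2m'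
        _ ≤ 2 * ((q:ℝ) * K) := by linarith
        _ ≤ 2 * ((q:ℝ) * (3 * X)) := by
            have := mul_le_mul_of_nonneg_left hKX (le_of_lt hq0)
            linarith
        _ = 6 * q * X := by ring
    -- final chain
    have hx0 : (0:ℝ) ≤ (D:ℝ) := by linarith
    have hXx : ((D:ℝ) ^ ((1:ℝ)/(s:ℝ))) ^ n = X := by
      rw [← Real.rpow_natCast ((D:ℝ) ^ ((1:ℝ)/(s:ℝ))) n, ← Real.rpow_mul hx0, hX]
      rw [one_div, inv_mul_eq_div]
    have hgoal : 1 / (12 * (q:ℝ)) * ((q:ℝ) ^ n / X) ≤ (q:ℝ) ^ n / (2 * N) := by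
      have hq0' : (q:ℝ) ≠ 0 := ne_of_gt hq0
      have heq : 1 / (12 * (q:ℝ)) * ((q:ℝ) ^ n / X) = (q:ℝ) ^ n / (12 * q * X) := by
        field_simp
      rw [heq, div_le_div_iff₀ (by positivity) (by positivity)]
      have hqn : (0:ℝ) ≤ (q:ℝ) ^ n := by positivity
      have h2N : 2 * (N:ℝ) ≤ 12 * q * X := by linarith
      have hstep : (q:ℝ) ^ n * (2 * N) ≤ (q:ℝ) ^ n * (12 * q * X) :=
        mul_le_mul_of_nonneg_left h2N hqn
      linarith [hstep]
    have hrwbase : (q:ℝ) / (((q : ℝ) - 1) * ((r : ℝ) - 1) + 1) ^ ((1 : ℝ) / ((r : ℝ) - 1))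
        = (q:ℝ) / ((D:ℝ) ^ ((1:ℝ)/(s:ℝ))) := by
      rw [← hDR, ← hsR]
    rw [hrwbase, div_pow, hXx]
    exact hgoal
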